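/- Let φ : (Fin d → ℝ) → ℝ be a convex function. If B1 ≻^{B0} B2, then ∑_{i=1}^d φ(X(B2,B0)_i^R) ≤ ∑_{i=1}^d φ(X(B1,B0)_i^R), where X_i^R denotes the i-th row vector of the matrix X; that is, f^φ_{B0}(B) := ∑_i φ(X(B,B0)_i^R) is a measure of compatibility relative to B0. -/

import Mathlib

open Matrix

noncomputable def transMatrix {d : ℕ}
    (B C : OrthonormalBasis (Fin d) ℂ (EuclideanSpace ℂ (Fin d))) :
    Matrix (Fin d) (Fin d) ℝ :=
  Matrix.of fun i j => ‖(inner ℂ (B i) (C j) : ℂ)‖ ^ 2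

def IsDoublyStochastic {d : ℕ} (M : Matrix (Fin d) (Fin d) ℝ) : Prop :=
  (∀ i j, 0 ≤ M i j) ∧ (∀ i, ∑ j, M i j = 1) ∧ (∀ j, ∑ i, M i j = 1)

/-- `B1 ≻^{B0} B2` : there is a doubly stochastic `M` with `X(B2,B0) = M · X(B1,B0)`. -/
def BasisMaj {d : ℕ}
    (B0 B1 B2 : OrthonormalBasis (Fin d) ℂ (EuclideanSpace ℂ (Fin d))) : Prop :=
  ∃ M : Matrix (Fin d) (Fin d) ℝ, IsDoublyStochastic M ∧
    transMatrix B2 B0 = M * transMatrix B1 B0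

/-- For convex `φ`, `f^φ_{B0}(B) = ∑_i φ(X(B,B0)_i^R)` (sum of `φ` over the rows)
is a measure of compatibility relative to `B0`: it is monotone under `≻^{B0}`. -/
theorem sum_convex_rows_monotone {d : ℕ}
    (φ : (Fin d → ℝ) → ℝ) (hφ : ConvexOn ℝ Set.univ φ)
    (B0 B1 B2 : OrthonormalBasis (Fin d) ℂ (EuclideanSpace ℂ (Fin d)))
    (h : BasisMaj B0 B1 B2) :
    ∑ i, φ (transMatrix B2 B0 i) ≤ ∑ i, φ (transMatrix B1 B0 i) := by
  obtain ⟨M, ⟨hM0, hMr, hMc⟩, hEq⟩ := h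
  have hrow : ∀ i, transMatrix B2 B0 i = ∑ k, M i k • transMatrix B1 B0 k := by
    intro i
    funext j
    rw [hEq]
    simp [Matrix.mul_apply, Finset.sum_apply]
  calc ∑ i, φ (transMatrix B2 B0 i)
      ≤ ∑ i, ∑ k, M i k * φ (transMatrix B1 B0 k) := by
        apply Finset.sum_le_sum
        intro i _
        rw [hrow i]
        exact hφ.map_sum_le (fun k _ => hM0 i k) (hMr i) (fun k _ => Set.mem_univ _)
    _ = ∑ k, (∑ i, M i k) * φ (transMatrix B1 B0 k) := by
        rw [Finset.sum_comm]
        simp [Finset.sum_mul]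
    _ = ∑ i, φ (transMatrix B1 B0 i) := by simp [hMc]
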